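/- For every m ∈ ℕ and every sample X = (X_1,...,X_m) ∈ ℕ^m with induced empirical measure μ̂_m, the empirical Rademacher complexity of the class of all boolean functions on ℕ admits the exact expression R̂_m(X) = (1/m)·∑_{x : μ̂_m(x) > 0} (1/2^{m·μ̂_m(x)})·⌈m·μ̂_m(x)/2⌉·C(m·μ̂_m(x), ⌈m·μ̂_m(x)/2⌉), where C(n,k) denotes the binomial coefficient. -/

import Mathlib

open scoped BigOperators

/-- The empirical measure induced by a sample `x` of size `m`:
`μ̂_m(i) = (1/m) ∑_t 1{x_t = i}`. -/
noncomputable def empMeas (m : ℕ) (x : Fin m → ℕ) (i : ℕ) : ℝ :=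
  ((Finset.univ.filter (fun t => x t = i)).card : ℝ) / m

/-- Total variation distance `(1/2) ∑_i |μ(i) - ν(i)|`. -/
noncomputable def tvDist (μ ν : ℕ → ℝ) : ℝ := (1 / 2) * ∑' i, |μ i - ν i|

/-- `Φ_m(ν) = (1/√m) ∑_j √(ν j)`. -/
noncomputable def Phi (m : ℕ) (ν : ℕ → ℝ) : ℝ :=
  (1 / Real.sqrt m) * ∑' j, Real.sqrt (ν j)

/-- `μ` is a probability distribution on ℕ. -/
def IsProb (μ : ℕ → ℝ) : Prop := (∀ i, 0 ≤ μ i) ∧ ∑' i, μ i = 1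

/-- Probability of the event `A` under the i.i.d. product `μ^m`. -/
noncomputable def probOf (μ : ℕ → ℝ) (m : ℕ) (A : Set (Fin m → ℕ)) : ℝ :=
  ∑' x : Fin m → ℕ, Set.indicator A (fun y => ∏ t, μ (y t)) x

/-- Expectation of `f` under the i.i.d. product `μ^m`. -/
noncomputable def expect (μ : ℕ → ℝ) (m : ℕ) (f : (Fin m → ℕ) → ℝ) : ℝ :=
  ∑' x : Fin m → ℕ, (∏ t, μ (x t)) * f x

/-- Empirical Rademacher complexity of the class of all boolean functions on ℕ,
conditional on the sample `x`:
`R̂_m(x) = E_σ [ sup_{f : ℕ → {0,1}} (1/m) ∑_t σ_t f(x_t) ]`,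
with `σ` uniform on `{-1,1}^m`. -/
noncomputable def empRad (m : ℕ) (x : Fin m → ℕ) : ℝ :=
  (1 / 2 ^ m) * ∑ σ : Fin m → Bool,
    sSup (Set.range (fun f : ℕ → Bool =>
      (1 / (m : ℝ)) * ∑ t, (if σ t then (1 : ℝ) else -1) * (if f (x t) then (1 : ℝ) else 0)))

/-- `Λ_m(μ) = ∑_{j : μ(j) < 1/m} μ(j) + (1/(2√m)) ∑_{j : μ(j) ≥ 1/m} √(μ(j))`. -/
noncomputable def Lam (m : ℕ) (μ : ℕ → ℝ) : ℝ :=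
  (∑' j, Set.indicator {j | μ j < 1 / (m : ℝ)} μ j)
    + (1 / (2 * Real.sqrt m)) *
      ∑' j, Set.indicator {j | 1 / (m : ℝ) ≤ μ j} (fun j => Real.sqrt (μ j)) j

/-- The half-norm `‖ν‖_{1/2} = (∑_i √(ν i))²`. -/
noncomputable def hfnrm (ν : ℕ → ℝ) : ℝ := (∑' i, Real.sqrt (ν i)) ^ 2

/-- `T_μ(η)` with respect to a non-increasing rearrangement `π` of `μ`:
the least `t` such that the tail mass beyond the `t` largest atoms is `< η`
(ranks are 0-indexed). -/
noncomputable def truncT (μ : ℕ → ℝ) (π : ℕ ≃ ℕ) (η : ℝ) : ℕ :=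
  sInf {t : ℕ | ∑' i, μ (π (i + t)) < η}

/-- The truncation `μ[η]`: keep only the `T_μ(η)` largest atoms of `μ`
(as ranked by the non-increasing rearrangement `π`). -/
noncomputable def trunc (μ : ℕ → ℝ) (π : ℕ ≃ ℕ) (η : ℝ) (i : ℕ) : ℝ :=
  Set.indicator {i | π.symm i < truncT μ π η} μ i

/-- Number of occurrences of `i` in the sample `x`; equals `m · μ̂_m(i)`. -/
def cnt (m : ℕ) (x : Fin m → ℕ) (i : ℕ) : ℕ :=
  (Finset.univ.filter (fun t => x t = i)).card


lemma key_id (n : ℕ) :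
    ∑ k ∈ Finset.range (n+1), (n.choose k : ℝ) * max (2*k - n : ℝ) 0
      = (((n+1)/2 : ℕ) : ℝ) * ((n.choose ((n+1)/2)) : ℝ) := by
  rcases Nat.eq_zero_or_pos n with rfl | hn
  · norm_num
  set c : ℕ := n/2 + 1 with hc
  have hsub : Finset.Ico c (n+1) ⊆ Finset.range (n+1) := by
    intro k hk; simp only [Finset.mem_Ico] at hk; simp only [Finset.mem_range]; omega
  have hzero : ∀ k ∈ Finset.range (n+1), k ∉ Finset.Ico c (n+1) →
      (n.choose k : ℝ) * max (2*k - n : ℝ) 0 = 0 := by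
    intro k hk hk'
    simp only [Finset.mem_range] at hk
    simp only [Finset.mem_Ico, not_and, not_lt] at hk'
    have hkc : k < c := by by_contra h; push_neg at h; omega
    have h2 : (2*(k:ℝ) - n) ≤ 0 := by
      have h3 : 2*k ≤ n := by omega
      have := (Nat.cast_le (α := ℝ)).2 h3
      push_cast at this ⊢; linarith
    rw [max_eq_right h2, mul_zero]
  rw [← Finset.sum_subset hsub hzero]
  have hterm : ∀ k ∈ Finset.Ico c (n+1),
      (n.choose k : ℝ) * max (2*k - n : ℝ) 0
        = (n : ℝ) * ((n-1).choose (k-1)) - (n : ℝ) * ((n-1).choose k) := by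
    intro k hk
    simp only [Finset.mem_Ico] at hk
    obtain ⟨hk1, hk2⟩ := hk
    have hkn : k ≤ n := by omega
    have hkk : 1 ≤ k := by omega
    have hmax : max (2*(k:ℝ) - n) 0 = 2*(k:ℝ) - n := by
      apply max_eq_left
      have h3 : n ≤ 2*k := by omega
      have := (Nat.cast_le (α := ℝ)).2 h3
      push_cast at this ⊢; linarith
    have e1 : n * (n-1).choose (k-1) = n.choose k * k := by
      have h := Nat.add_one_mul_choose_eq (n-1) (k-1)
      rw [show n-1+1 = n by omega, show k-1+1 = k by omega] at h
      exact h
    have e2 : n * (n-1).choose k = n.choose k * (n - k) := by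
      have h := Nat.add_one_mul_choose_eq (n-1) k
      rw [show n-1+1 = n by omega] at h
      rw [h, Nat.choose_succ_right_eq]
    have c1 : (n:ℝ) * ((n-1).choose (k-1)) = (n.choose k : ℝ) * k := by
      exact_mod_cast congrArg (Nat.cast (R := ℝ)) e1
    have c2 : (n:ℝ) * ((n-1).choose k) = (n.choose k : ℝ) * ((n:ℝ) - k) := by
      have := congrArg (Nat.cast (R := ℝ)) e2
      push_cast [Nat.cast_sub hkn] at this
      exact this
    rw [hmax, c1, c2]
    ring
  rw [Finset.sum_congr rfl hterm]
  rw [Finset.sum_Ico_eq_sum_range]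
  have tel := Finset.sum_range_sub' (fun j => (n : ℝ) * ((n-1).choose (c - 1 + j))) (n + 1 - c)
  have hcong : ∀ j ∈ Finset.range (n+1-c),
      (n : ℝ) * ((n-1).choose (c + j - 1)) - (n : ℝ) * ((n-1).choose (c + j))
        = (n : ℝ) * ((n-1).choose (c - 1 + j)) - (n : ℝ) * ((n-1).choose (c - 1 + (j+1))) := by
    intro j _
    rw [show c + j - 1 = c - 1 + j by omega, show c + j = c - 1 + (j+1) by omega]
  rw [Finset.sum_congr rfl hcong, tel]
  rw [show c - 1 + 0 = c - 1 by omega, show c - 1 + (n + 1 - c) = n by omega]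
  rw [Nat.choose_eq_zero_of_lt (show n - 1 < n by omega), Nat.cast_zero, mul_zero, sub_zero]
  have hsym : (n-1).choose (n/2) = (n-1).choose ((n+1)/2 - 1) := by
    rcases Nat.even_or_odd n with h | h
    · obtain ⟨r, rfl⟩ := h
      rw [← Nat.choose_symm (show (r+r)/2 ≤ r+r-1 by omega)]
      congr 1; omega
    · obtain ⟨r, rfl⟩ := h
      congr 1; omega
  have hfin : n * (n-1).choose (c-1) = ((n+1)/2) * n.choose ((n+1)/2) := by
    rw [show c - 1 = n/2 by omega, hsym]
    have h := Nat.add_one_mul_choose_eq (n-1) ((n+1)/2 - 1)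
    rw [show n-1+1 = n by omega, show (n+1)/2-1+1 = (n+1)/2 by omega] at h
    exact h.trans (Nat.mul_comm _ _)
  exact_mod_cast congrArg (Nat.cast (R := ℝ)) hfin


lemma bool_sum (α : Type*) [Fintype α] [DecidableEq α] :
    ∑ τ : α → Bool, max (∑ t : α, (if τ t then (1:ℝ) else -1)) 0
      = (((Fintype.card α + 1)/2 : ℕ):ℝ)
          * (((Fintype.card α).choose ((Fintype.card α + 1)/2)):ℝ) := by
  set n := Fintype.card α with hn
  have step1 : ∀ τ : α → Bool, (∑ t : α, (if τ t then (1:ℝ) else -1))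
      = 2 * ((Finset.univ.filter (fun t => τ t = true)).card : ℝ) - n := by
    intro τ
    have h1 : ∀ t : α, (if τ t then (1:ℝ) else -1) = 2*(if τ t = true then (1:ℝ) else 0) - 1 := by
      intro t; by_cases h : τ t <;> simp [h] <;> norm_num
    rw [Finset.sum_congr rfl (fun t _ => h1 t), Finset.sum_sub_distrib, ← Finset.mul_sum,
      Finset.sum_boole, Finset.sum_const, Finset.card_univ, ← hn]
    simp
  calc ∑ τ : α → Bool, max (∑ t : α, (if τ t then (1:ℝ) else -1)) 0
      = ∑ τ : α → Bool, max (2 * ((Finset.univ.filter (fun t => τ t = true)).card : ℝ) - n) 0 := by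
        exact Finset.sum_congr rfl (fun τ _ => by rw [step1 τ])
    _ = ∑ A ∈ (Finset.univ : Finset α).powerset, max (2 * (A.card : ℝ) - n) 0 := by
        refine Finset.sum_bij' (fun τ _ => Finset.univ.filter (fun t => τ t = true))
          (fun A _ => fun t => decide (t ∈ A)) ?_ ?_ ?_ ?_ ?_
        · intro τ _; simp
        · intro A _; exact Finset.mem_univ _
        · intro τ _; funext t; simp
        · intro A _; ext t; simp
        · intro τ _; rfl
    _ = ∑ k ∈ Finset.range (n+1), (n.choose k) • max (2 * (k : ℝ) - n) 0 := by
        have := Finset.sum_powerset_apply_card (fun k => max (2 * (k : ℝ) - n) 0)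
          (x := (Finset.univ : Finset α))
        rw [this, Finset.card_univ, ← hn]
    _ = (((n + 1)/2 : ℕ):ℝ) * ((n.choose ((n + 1)/2)):ℝ) := by
        rw [← key_id n]
        exact Finset.sum_congr rfl (fun k _ => by rw [nsmul_eq_mul])


lemma sup_lem (m : ℕ) (hm : 0 < m) (x : Fin m → ℕ) (σ : Fin m → Bool) :
    sSup (Set.range (fun f : ℕ → Bool =>
      (1 / (m : ℝ)) * ∑ t, (if σ t then (1 : ℝ) else -1) * (if f (x t) then (1 : ℝ) else 0)))
    = (1 / (m : ℝ)) * ∑ i ∈ Finset.image x Finset.univ,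
        max (∑ t ∈ Finset.univ.filter (fun t => x t = i), (if σ t then (1:ℝ) else -1)) 0 := by
  classical
  set I := Finset.image x Finset.univ with hI
  set S : ℕ → ℝ := fun i => ∑ t ∈ Finset.univ.filter (fun t => x t = i),
    (if σ t then (1:ℝ) else -1) with hS
  set g : (ℕ → Bool) → ℝ := fun f =>
      (1 / (m : ℝ)) * ∑ t, (if σ t then (1 : ℝ) else -1) * (if f (x t) then (1 : ℝ) else 0)
    with hg
  have hdec : ∀ f : ℕ → Bool, g f = (1 / (m : ℝ)) * ∑ i ∈ I, (if f i then S i else 0) := by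
    intro f
    simp only [hg]
    congr 1
    rw [← Finset.sum_fiberwise_of_maps_to (g := x) (t := I)
      (fun t _ => Finset.mem_image_of_mem x (Finset.mem_univ t))]
    refine Finset.sum_congr rfl (fun i _ => ?_)
    have h1 : ∀ t ∈ Finset.univ.filter (fun t => x t = i),
        (if σ t then (1 : ℝ) else -1) * (if f (x t) then (1 : ℝ) else 0)
          = (if f i then (if σ t then (1 : ℝ) else -1) else 0) := by
      intro t ht
      simp only [Finset.mem_filter] at ht
      rw [ht.2]
      by_cases h : f i <;> simp [h]
    rw [Finset.sum_congr rfl h1]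
    by_cases h : f i <;> simp [h, hS]
  have hmpos : (0:ℝ) < m := by exact_mod_cast hm
  have hb : ∀ f : ℕ → Bool, g f ≤ (1 / (m : ℝ)) * ∑ i ∈ I, max (S i) 0 := by
    intro f
    rw [hdec f]
    apply mul_le_mul_of_nonneg_left _ (by positivity)
    refine Finset.sum_le_sum (fun i _ => ?_)
    by_cases h : f i <;> simp [h, le_max_left, le_max_right]
  set f₀ : ℕ → Bool := fun i => decide (0 < S i) with hf₀
  have hval : g f₀ = (1 / (m : ℝ)) * ∑ i ∈ I, max (S i) 0 := by
    rw [hdec f₀]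
    congr 1
    refine Finset.sum_congr rfl (fun i _ => ?_)
    by_cases h : 0 < S i
    · simp [hf₀, h, max_eq_left (le_of_lt h)]
    · simp [hf₀, h, max_eq_right (not_lt.mp h)]
  apply le_antisymm
  · exact csSup_le (Set.range_nonempty _) (by rintro _ ⟨f, rfl⟩; exact hb f)
  · rw [← hval]
    exact le_csSup ⟨_, by rintro _ ⟨f, rfl⟩; exact hb f⟩ ⟨f₀, rfl⟩



lemma factor_lem (m : ℕ) (x : Fin m → ℕ) (i : ℕ) :
    ∑ σ : Fin m → Bool,
        max (∑ t ∈ Finset.univ.filter (fun t => x t = i), (if σ t then (1:ℝ) else -1)) 0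
      = 2^(m - cnt m x i) * ((((cnt m x i + 1)/2 : ℕ):ℝ)
          * (((cnt m x i).choose ((cnt m x i + 1)/2)):ℝ)) := by
  classical
  set p : Fin m → Prop := fun t => x t = i with hp
  have hcard : Fintype.card {t // p t} = cnt m x i := by
    rw [Fintype.card_subtype, cnt]
  have h1 : ∀ σ : Fin m → Bool,
      (∑ t ∈ Finset.univ.filter (fun t => x t = i), (if σ t then (1:ℝ) else -1))
        = ∑ t : {t // p t}, (if σ t.1 then (1:ℝ) else -1) := by
    intro σ
    exact Finset.sum_subtype _ (by simp [hp]) _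
  simp only [h1]
  -- split σ into (τ, ρ)
  set e := (Equiv.piEquivPiSubtypeProd p (fun _ => Bool)).symm with he
  rw [← Equiv.sum_comp e (fun σ : Fin m → Bool =>
    max (∑ t : {t // p t}, (if σ t.1 then (1:ℝ) else -1)) 0)]
  rw [Fintype.sum_prod_type]
  have h2 : ∀ (τ : {t // p t} → Bool) (ρ : {t // ¬ p t} → Bool) (t : {t // p t}),
      (e (τ, ρ)) t.1 = τ t := by
    intro τ ρ t
    obtain ⟨t, ht⟩ := t
    rw [he]
    simp [Equiv.piEquivPiSubtypeProd, ht]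
  have h3 : ∀ (τ : {t // p t} → Bool) (ρ : {t // ¬ p t} → Bool),
      max (∑ t : {t // p t}, (if (e (τ, ρ)) t.1 then (1:ℝ) else -1)) 0
        = max (∑ t : {t // p t}, (if τ t then (1:ℝ) else -1)) 0 := by
    intro τ ρ
    congr 1
    exact Finset.sum_congr rfl (fun t _ => by rw [h2 τ ρ t])
  simp only [h3]
  rw [Finset.sum_congr rfl (fun τ _ => Finset.sum_const _)]
  simp only [Finset.card_univ, nsmul_eq_mul]
  rw [← Finset.mul_sum, bool_sum, hcard]
  congr 1
  rw [Fintype.card_fun, Fintype.card_subtype_compl, hcard, Fintype.card_fin, Fintype.card_bool]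
  push_cast
  ring

/-- exact expression for the empirical Rademacher complexity:
`R̂_m(x) = (1/m) ∑_{i : μ̂_m(i) > 0} 2^{-n_i} ⌈n_i/2⌉ C(n_i, ⌈n_i/2⌉)` where
`n_i = m·μ̂_m(i)` and `⌈n/2⌉ = (n+1)/2` in ℕ. -/
theorem empRad_exact (m : ℕ) (hm : 0 < m) (x : Fin m → ℕ) :
    empRad m x = (1 / (m : ℝ)) * ∑' i : ℕ,
      Set.indicator {i | 0 < cnt m x i}
        (fun i => ((((cnt m x i + 1) / 2 : ℕ) : ℝ) *
            ((cnt m x i).choose ((cnt m x i + 1) / 2) : ℝ)) / 2 ^ (cnt m x i)) i := by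
  classical
  have hcnt_le : ∀ i, cnt m x i ≤ m := fun i => by
    simpa [cnt] using Finset.card_filter_le Finset.univ (fun t => x t = i)
  set I := Finset.image x Finset.univ with hI
  set V : ℕ → ℝ := fun i => (((cnt m x i + 1) / 2 : ℕ) : ℝ)
      * (((cnt m x i).choose ((cnt m x i + 1) / 2)) : ℝ) with hV
  have hRHS : (∑' i : ℕ, Set.indicator {i | 0 < cnt m x i}
        (fun i => ((((cnt m x i + 1) / 2 : ℕ) : ℝ) *
            ((cnt m x i).choose ((cnt m x i + 1) / 2) : ℝ)) / 2 ^ (cnt m x i)) i)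
      = ∑ i ∈ I, V i / 2 ^ (cnt m x i) := by
    rw [tsum_eq_sum (s := I) ?h0]
    case h0 =>
      intro i hi
      apply Set.indicator_of_notMem
      simp only [Set.mem_setOf_eq, not_lt, Nat.le_zero, cnt, Finset.card_eq_zero,
        Finset.filter_eq_empty_iff]
      intro t _
      exact fun h => hi (Finset.mem_image.2 ⟨t, Finset.mem_univ t, h⟩)
    refine Finset.sum_congr rfl (fun i hi => ?_)
    rw [Set.indicator_of_mem]
    simp only [Set.mem_setOf_eq, cnt, Finset.card_pos]
    obtain ⟨t, _, rfl⟩ := Finset.mem_image.1 hi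
    exact ⟨t, by simp⟩
  rw [hRHS]
  show (1 / 2 ^ m : ℝ) * ∑ σ : Fin m → Bool,
      sSup (Set.range (fun f : ℕ → Bool =>
        (1 / (m : ℝ)) * ∑ t, (if σ t then (1 : ℝ) else -1) * (if f (x t) then (1 : ℝ) else 0)))
    = (1 / (m : ℝ)) * ∑ i ∈ I, V i / 2 ^ (cnt m x i)
  rw [Finset.sum_congr rfl (fun σ _ => sup_lem m hm x σ)]
  rw [← Finset.mul_sum, Finset.sum_comm]
  have hper : ∀ i ∈ I, (1 / 2 ^ m : ℝ) * ∑ σ : Fin m → Bool,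
      max (∑ t ∈ Finset.univ.filter (fun t => x t = i), (if σ t then (1:ℝ) else -1)) 0
      = V i / 2 ^ (cnt m x i) := by
    intro i _
    rw [factor_lem m x i]
    have h2 : (2:ℝ) ^ (m - cnt m x i) * 2 ^ (cnt m x i) = 2 ^ m := by
      rw [← pow_add]
      congr 1
      have := hcnt_le i
      omega
    have hpos : (0:ℝ) < 2 ^ (cnt m x i) := by positivity
    have hpos2 : (0:ℝ) < 2 ^ m := by positivity
    rw [hV]
    field_simp
    rw [← h2]
    ring
  rw [← Finset.sum_congr rfl hper]
  rw [← Finset.mul_sum]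
  ring
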